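/- Fix λ > 0, an integer l ≥ 1, and constants G₀ > 0, c_B > 0. Define c̃ⁱ(x) = −(√λ·c_B/(√(λ + l²) + √(1 + l²)))·e^{√(λ + l²)·x} and c̃ᵒ(x) = −(√λ·c_B/(√(λ + l²) + √(1 + l²)))·e^{−√(1 + l²)·x}, and let c₀ⁱ(x) = (c_B/(√λ + 1))·e^{√λ·x}, c₀ᵒ(x) = c_B − (c_B·√λ/(√λ + 1))·e^{−x}. Then: (1) −(c̃ⁱ)''(x) + (λ + l²)·c̃ⁱ(x) = 0 for all x ≤ 0; (2) −(c̃ᵒ)''(x) + (1 + l²)·c̃ᵒ(x) = 0 for all x ≥ 0; (3) (c₀ⁱ)'(0) + c̃ⁱ(0) = (c₀ᵒ)'(0) + c̃ᵒ(0); (4) (c₀ⁱ)''(0) + (c̃ⁱ)'(0) = (c₀ᵒ)''(0) + (c̃ᵒ)'(0); (5) c̃ⁱ is bounded on (−∞, 0] and c̃ᵒ is bounded on [0, ∞). -/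

import Mathlib

lemma deriv_mul_exp (a k : ℝ) :
    (deriv fun x : ℝ => a * Real.exp (k * x)) = fun x => a * k * Real.exp (k * x) := by
  funext x
  have h : HasDerivAt (fun x : ℝ => a * Real.exp (k * x)) (a * k * Real.exp (k * x)) x := by
    have := (((hasDerivAt_id x).const_mul k).exp).const_mul a
    simpa [mul_comm, mul_assoc, mul_left_comm] using this
  exact h.deriv

theorem stmt_13 (G0 cB lam : ℝ) (hG0 : 0 < G0) (hcB : 0 < cB) (hlam : 0 < lam)
    (l : ℕ) (hl : 1 ≤ l)
    (c0i c0o cti cto : ℝ → ℝ)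
    (hc0i : c0i = fun x : ℝ => cB / (Real.sqrt lam + 1) * Real.exp (Real.sqrt lam * x))
    (hc0o : c0o = fun x : ℝ =>
      cB - cB * Real.sqrt lam / (Real.sqrt lam + 1) * Real.exp (-x))
    (hcti : cti = fun x : ℝ =>
      -(Real.sqrt lam * cB / (Real.sqrt (lam + (l : ℝ) ^ 2) + Real.sqrt (1 + (l : ℝ) ^ 2))) *
        Real.exp (Real.sqrt (lam + (l : ℝ) ^ 2) * x))
    (hcto : cto = fun x : ℝ =>
      -(Real.sqrt lam * cB / (Real.sqrt (lam + (l : ℝ) ^ 2) + Real.sqrt (1 + (l : ℝ) ^ 2))) *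
        Real.exp (-(Real.sqrt (1 + (l : ℝ) ^ 2)) * x)) :
    (∀ x : ℝ, x ≤ 0 → -(deriv (deriv cti) x) + (lam + (l : ℝ) ^ 2) * cti x = 0) ∧
    (∀ x : ℝ, 0 ≤ x → -(deriv (deriv cto) x) + (1 + (l : ℝ) ^ 2) * cto x = 0) ∧
    deriv c0i 0 + cti 0 = deriv c0o 0 + cto 0 ∧
    deriv (deriv c0i) 0 + deriv cti 0 = deriv (deriv c0o) 0 + deriv cto 0 ∧
    (∃ C : ℝ, ∀ x : ℝ, x ≤ 0 → |cti x| ≤ C) ∧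
    (∃ C : ℝ, ∀ x : ℝ, 0 ≤ x → |cto x| ≤ C) := by
  set s := Real.sqrt lam with hs
  set S := Real.sqrt (lam + (l : ℝ) ^ 2) with hS
  set T := Real.sqrt (1 + (l : ℝ) ^ 2) with hT
  set A := -(s * cB / (S + T)) with hA
  have hlnn : (0:ℝ) ≤ (l : ℝ) ^ 2 := by positivity
  have hS2 : S ^ 2 = lam + (l : ℝ) ^ 2 := Real.sq_sqrt (by linarith)
  have hT2 : T ^ 2 = 1 + (l : ℝ) ^ 2 := Real.sq_sqrt (by linarith)
  have hSpos : 0 < S := Real.sqrt_pos.2 (by positivity)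
  have hTpos : 0 < T := Real.sqrt_pos.2 (by positivity)
  have hspos : 0 < s := Real.sqrt_pos.2 hlam
  have hs1 : s + 1 ≠ 0 := by positivity
  have hST : S + T ≠ 0 := by positivity
  -- derivatives of cti
  have dcti : deriv cti = fun x => A * S * Real.exp (S * x) := by
    rw [hcti]; exact deriv_mul_exp A S
  have ddcti : deriv (deriv cti) = fun x => A * S * S * Real.exp (S * x) := by
    rw [dcti]; simpa [mul_assoc] using deriv_mul_exp (A * S) S
  -- derivatives of cto
  have dcto : deriv cto = fun x => A * (-T) * Real.exp (-T * x) := by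
    rw [hcto]; exact deriv_mul_exp A (-T)
  have ddcto : deriv (deriv cto) = fun x => A * (-T) * (-T) * Real.exp (-T * x) := by
    rw [dcto]; simpa [mul_assoc] using deriv_mul_exp (A * (-T)) (-T)
  -- derivatives of c0i
  have dc0i : deriv c0i = fun x => cB / (s + 1) * s * Real.exp (s * x) := by
    rw [hc0i]; exact deriv_mul_exp (cB / (s + 1)) s
  have ddc0i : deriv (deriv c0i) = fun x => cB / (s + 1) * s * s * Real.exp (s * x) := by
    rw [dc0i]; simpa [mul_assoc] using deriv_mul_exp (cB / (s + 1) * s) s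
  -- derivatives of c0o
  have hc0o' : c0o = fun x : ℝ => cB + (-(cB * s / (s + 1))) * Real.exp ((-1) * x) := by
    rw [hc0o]; funext x; ring_nf
  have dc0o : deriv c0o = fun x => (-(cB * s / (s + 1))) * (-1) * Real.exp ((-1) * x) := by
    rw [hc0o']
    funext x
    have h : HasDerivAt (fun x : ℝ => cB + (-(cB * s / (s + 1))) * Real.exp ((-1) * x))
        ((-(cB * s / (s + 1))) * (-1) * Real.exp ((-1) * x)) x := by
      have h2 := ((((hasDerivAt_id x).const_mul (-1:ℝ)).exp).const_mul (-(cB * s / (s + 1))))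
      have h3 := (hasDerivAt_const x cB).add h2
      convert h3 using 1
      · rfl
      · rfl
      · funext y; simp only [Pi.add_apply, id_eq]
      · simp [id_eq] <;> ring_nf
    exact h.deriv
  have ddc0o : deriv (deriv c0o) = fun x =>
      (-(cB * s / (s + 1))) * (-1) * (-1) * Real.exp ((-1) * x) := by
    rw [dc0o]; simpa [mul_assoc] using deriv_mul_exp ((-(cB * s / (s + 1))) * (-1)) (-1)
  refine ⟨?_, ?_, ?_, ?_, ?_, ?_⟩
  · intro x _
    rw [ddcti, hcti]
    simp only [← hs, ← hS, ← hT, ← hA]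
    have : A * S * S = A * (lam + (l : ℝ) ^ 2) := by
      rw [← hS2]; ring
    rw [this]; ring
  · intro x _
    rw [ddcto, hcto]
    simp only [← hs, ← hS, ← hT, ← hA]
    have : A * (-T) * (-T) = A * (1 + (l : ℝ) ^ 2) := by
      rw [← hT2]; ring
    rw [this]; ring
  · rw [dc0i, dc0o, hcti, hcto]
    simp only [← hs, ← hS, ← hT, ← hA]
    simp only [mul_zero, Real.exp_zero, mul_one, neg_zero]
    field_simp
  · rw [ddc0i, ddc0o, dcti, dcto]
    simp only [mul_zero, Real.exp_zero, mul_one, neg_zero]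
    rw [hA]
    field_simp
    ring
  · refine ⟨|A|, fun x hx => ?_⟩
    rw [hcti]
    simp only [← hs, ← hS, ← hT, ← hA]
    rw [abs_mul, Real.abs_exp]
    have : Real.exp (S * x) ≤ 1 := Real.exp_le_one_iff.2 (by nlinarith)
    nlinarith [abs_nonneg A]
  · refine ⟨|A|, fun x hx => ?_⟩
    rw [hcto]
    simp only [← hs, ← hS, ← hT, ← hA]
    rw [abs_mul, Real.abs_exp]
    have : Real.exp (-T * x) ≤ 1 := Real.exp_le_one_iff.2 (by nlinarith)
    nlinarith [abs_nonneg A]
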